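/- Given bipartite graphs (S_h ∪ [n], E_h) for h ∈ [t] where every vertex of S_h has degree 3, the composed Clever Shopper instance (with identifier books x^i_j, identifier shops σ_j for j ∈ J = {0,1}×[⌈log t⌉], prices T+1, per-shop discounts equal to degree at thresholds degree·(T+1), budget T·n') is a yes-instance if and only if some h ∈ [t] admits an exact cover, i.e., a subset S'_h ⊆ S_h such that every i ∈ [n] has exactly one neighbor in S'_h. -/
import Mathlib

lemma cost_iff_plan {Book Shop : Type} [Fintype Book] [Fintype Shop] [DecidableEq Shop]
    (sells : Shop → Book → Bool) (T n' : ℕ)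
    (deg : Shop → ℕ)
    (hdeg : ∀ s, deg s = (Finset.univ.filter (fun b => sells s b = true)).card)
    (hn' : n' = Fintype.card Book) :
    (∃ g : Book → Shop, (∀ b, sells (g b) b = true) ∧
        (((T : ℤ) + 1) * (n' : ℤ) -
            ∑ s ∈ Finset.univ.filter
                (fun s : Shop =>
                  deg s * (T + 1) ≤
                    (Finset.univ.filter (fun b : Book => g b = s)).card * (T + 1)),
              (deg s : ℤ)
          ≤ (T : ℤ) * (n' : ℤ))) ↔
    (∃ g : Book → Shop, (∀ b, sells (g b) b = true) ∧
        ∀ b b', sells (g b) b' = true → g b' = g b) := by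
  classical
  constructor
  · rintro ⟨g, hsell, hcost⟩
    refine ⟨g, hsell, ?_⟩
    set A : Shop → ℕ := fun s => (Finset.univ.filter (fun b : Book => g b = s)).card with hA
    set F : Finset Shop := Finset.univ.filter
        (fun s : Shop => deg s * (T + 1) ≤ A s * (T + 1)) with hF
    have hAle : ∀ s, A s ≤ deg s := by
      intro s
      rw [hdeg]
      apply Finset.card_le_card
      intro b hb
      simp only [Finset.mem_filter, Finset.mem_univ, true_and] at *
      exact hb ▸ hsell b
    have hsum : ∑ s, A s = n' := by
      rw [hn', ← Finset.card_univ]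
      exact (Finset.card_eq_sum_card_fiberwise (fun b _ => Finset.mem_univ (g b))).symm
    have hKeyZ : (n' : ℤ) ≤ ∑ s ∈ F, (deg s : ℤ) := by
      have : ((T : ℤ) + 1) * (n' : ℤ) = (T : ℤ) * n' + n' := by ring
      linarith [hcost]
    have hKeyN : n' ≤ ∑ s ∈ F, deg s := by exact_mod_cast hKeyZ
    have hAF : ∀ s ∈ F, A s = deg s := by
      intro s hs
      simp only [hF, Finset.mem_filter, Finset.mem_univ, true_and] at hs
      exact le_antisymm (hAle s) (Nat.le_of_mul_le_mul_right hs (Nat.succ_pos T))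
    have hsplit := Finset.sum_filter_add_sum_filter_not Finset.univ
        (fun s : Shop => deg s * (T + 1) ≤ A s * (T + 1)) A
    rw [← hF] at hsplit
    have h1 : ∑ s ∈ F, A s = ∑ s ∈ F, deg s := Finset.sum_congr rfl hAF
    have h2 : ∑ s ∈ Finset.univ.filter
        (fun s : Shop => ¬ (deg s * (T + 1) ≤ A s * (T + 1))), A s = 0 := by
      omega
    have hmem : ∀ b, g b ∈ F := by
      intro b
      by_contra hb
      have hb' : g b ∈ Finset.univ.filter
          (fun s : Shop => ¬ (deg s * (T + 1) ≤ A s * (T + 1))) := by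
        simp only [hF, Finset.mem_filter, Finset.mem_univ, true_and] at hb ⊢
        exact hb
      have h0 : A (g b) = 0 := by
        have := (Finset.sum_eq_zero_iff.mp h2) (g b) hb'
        exact this
      have : b ∈ Finset.univ.filter (fun b' : Book => g b' = g b) := by simp
      rw [hA] at h0
      simp only [Finset.card_eq_zero] at h0
      rw [h0] at this
      exact absurd this (Finset.notMem_empty b)
    intro b b' hbb'
    have hsets : Finset.univ.filter (fun x : Book => g x = g b)
        = Finset.univ.filter (fun x : Book => sells (g b) x = true) := by
      apply Finset.eq_of_subset_of_card_le
      · intro x hx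
        simp only [Finset.mem_filter, Finset.mem_univ, true_and] at *
        exact hx ▸ hsell x
      · rw [← hdeg, ← hAF (g b) (hmem b)]
    have : b' ∈ Finset.univ.filter (fun x : Book => g x = g b) := by
      rw [hsets]; simp [hbb']
    simpa using this
  · rintro ⟨g, hsell, hstar⟩
    refine ⟨g, hsell, ?_⟩
    set A : Shop → ℕ := fun s => (Finset.univ.filter (fun b : Book => g b = s)).card with hA
    set F : Finset Shop := Finset.univ.filter
        (fun s : Shop => deg s * (T + 1) ≤ A s * (T + 1)) with hF
    have himg : ∀ b, A (g b) = deg (g b) := by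
      intro b
      have hsets : Finset.univ.filter (fun x : Book => g x = g b)
          = Finset.univ.filter (fun x : Book => sells (g b) x = true) := by
        ext x
        simp only [Finset.mem_filter, Finset.mem_univ, true_and]
        exact ⟨fun hx => hx ▸ hsell x, fun hx => hstar b x hx⟩
      rw [hA, hdeg]
      simp only [hsets]
    have hsub : Finset.univ.image g ⊆ F := by
      intro s hs
      rcases Finset.mem_image.mp hs with ⟨b, -, rfl⟩
      simp only [hF, Finset.mem_filter, Finset.mem_univ, true_and]
      rw [himg b]
    have hsum : ∑ s, A s = n' := by
      rw [hn', ← Finset.card_univ]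
      exact (Finset.card_eq_sum_card_fiberwise (fun b _ => Finset.mem_univ (g b))).symm
    have h0 : ∀ s ∉ Finset.univ.image g, A s = 0 := by
      intro s hs
      rw [hA]
      simp only [Finset.card_eq_zero]
      ext b
      simp only [Finset.mem_filter, Finset.mem_univ, true_and, Finset.notMem_empty,
        iff_false]
      intro h
      exact hs (Finset.mem_image.mpr ⟨b, Finset.mem_univ b, h⟩)
    have hsum2 : ∑ s ∈ Finset.univ.image g, A s = n' := by
      rw [← hsum]
      exact Finset.sum_subset (Finset.subset_univ _) (fun s _ hs => h0 s hs)
    have hsum3 : ∑ s ∈ Finset.univ.image g, deg s = n' := by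
      rw [← hsum2]
      refine Finset.sum_congr rfl ?_
      intro s hs
      rcases Finset.mem_image.mp hs with ⟨b, -, rfl⟩
      exact (himg b).symm
    have hN : n' ≤ ∑ s ∈ F, deg s := by
      rw [← hsum3]
      exact Finset.sum_le_sum_of_subset hsub
    have hZ : (n' : ℤ) ≤ ∑ s ∈ F, (deg s : ℤ) := by exact_mod_cast hN
    have : ((T : ℤ) + 1) * (n' : ℤ) = (T : ℤ) * n' + n' := by ring
    linarith

lemma bit_diff {L a b : ℕ} (ha : a < 2^L) (hb : b < 2^L) (hne : a ≠ b) :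
    ∃ p, p < L ∧ a.testBit p ≠ b.testBit p := by
  by_contra hcon
  push_neg at hcon
  apply hne
  apply Nat.eq_of_testBit_eq
  intro p
  by_cases hp : p < L
  · exact hcon p hp
  · have hL : 2^L ≤ 2^p := Nat.pow_le_pow_right (by norm_num) (le_of_not_gt hp)
    rw [Nat.testBit_lt_two_pow (lt_of_lt_of_le ha hL),
        Nat.testBit_lt_two_pow (lt_of_lt_of_le hb hL)]

/-- Or-composition correctness: given `t` X3C instances over `[n]`, each given
as a collection `C h` of 3-sets, the composed Clever Shopper instance (with
identifier books `x^i_j` and identifier shops `σ_j` for `j ∈ J = Bool × [L]`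
with `L = Nat.size t`, every price `T + 1`, every shop of degree `k` having
threshold `k (T + 1)` and discount `k`, and budget `T · n'` where `n'` is the
number of books) is a yes-instance iff some instance `h` admits an exact
cover. Shop `.inl j = σ_j` sells the books `x^i_j`; shop `.inr (h, c)` (for
`c ∈ C h`) sells book `i` for each `i ∈ c` together with the books `x^i_j`
for `j ∈ Key (h+1)`, where `Key` is the binary-digit identifier. -/
theorem stmt_16 (t n T : ℕ) (ht : 1 ≤ t)
    (C : Fin t → Finset (Finset (Fin n)))
    (hdeg3 : ∀ h, ∀ c ∈ C h, c.card = 3) :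
    let L := Nat.size t
    let J := Bool × Fin L
    let Key : ℕ → Finset J := fun h =>
      Finset.univ.filter (fun p => h.testBit p.2.val = p.1)
    let Book := (Fin n × J) ⊕ Fin n
    let Shop := J ⊕ (Fin t × Finset (Fin n))
    let sells : Shop → Book → Bool := fun s b =>
      match s, b with
      | .inl j, .inl (_, j') => j' == j
      | .inl _, .inr _ => false
      | .inr (h, c), .inl (i, j) =>
          decide (c ∈ C h) && decide (i ∈ c) && decide (j ∈ Key (h.val + 1))
      | .inr (h, c), .inr i => decide (c ∈ C h) && decide (i ∈ c)
    let deg : Shop → ℕ := fun s => (Finset.univ.filter (fun b => sells s b = true)).card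
    let n' : ℕ := Fintype.card Book
    (∃ g : Book → Shop, (∀ b, sells (g b) b = true) ∧
        (((T : ℤ) + 1) * (n' : ℤ) -
            ∑ s ∈ Finset.univ.filter
                (fun s : Shop =>
                  deg s * (T + 1) ≤
                    (Finset.univ.filter (fun b : Book => g b = s)).card * (T + 1)),
              (deg s : ℤ)
          ≤ (T : ℤ) * (n' : ℤ))) ↔
      (∃ h : Fin t, ∃ S' ⊆ C h, ∀ i : Fin n, ∃! c, c ∈ S' ∧ i ∈ c) := by
  intro L J Key Book Shop sells deg n'
  classical
  refine (cost_iff_plan sells T n' deg (fun s => rfl) rfl).trans ?_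
  have hKeymem : ∀ (m : ℕ) (j : J), j ∈ Key m ↔ m.testBit j.2.val = j.1 := by
    intro m j
    show j ∈ Finset.univ.filter _ ↔ _
    rw [Finset.mem_filter]
    simp
  constructor
  · rintro ⟨g, hsell, hstar⟩
    by_cases hn : n = 0
    · exact ⟨⟨0, ht⟩, ∅, Finset.empty_subset _, fun i => absurd i.isLt (by omega)⟩
    · have hform : ∀ i : Fin n, ∃ hc : Fin t × Finset (Fin n),
          g (Sum.inr i) = Sum.inr hc ∧ hc.2 ∈ C hc.1 ∧ i ∈ hc.2 := by
        intro i
        have hs := hsell (Sum.inr i)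
        rcases hgi : g (Sum.inr i) with j | ⟨h, c⟩
        · rw [hgi] at hs
          exact absurd (show false = true from hs) (by simp)
        · rw [hgi] at hs
          have hs' : (decide (c ∈ C h) && decide (i ∈ c)) = true := hs
          simp only [Bool.and_eq_true, decide_eq_true_eq] at hs'
          exact ⟨(h, c), rfl, hs'.1, hs'.2⟩
      choose Fc hgF hCF hmF using hform
      set i0 : Fin n := ⟨0, Nat.pos_of_ne_zero hn⟩ with hi0
      have hsame : ∀ i, (Fc i).1 = (Fc i0).1 := by
        intro i
        by_contra hne
        have hlt1 : (Fc i).1.val + 1 < 2 ^ L :=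
          lt_of_le_of_lt (Fc i).1.isLt (Nat.lt_size_self t)
        have hlt0 : (Fc i0).1.val + 1 < 2 ^ L :=
          lt_of_le_of_lt (Fc i0).1.isLt (Nat.lt_size_self t)
        have hne' : (Fc i).1.val + 1 ≠ (Fc i0).1.val + 1 := by
          intro heq
          exact hne (Fin.ext (by omega))
        obtain ⟨p, hpL, hpbit⟩ := bit_diff hlt1 hlt0 hne'
        set j : J := (Nat.testBit ((Fc i).1.val + 1) p, ⟨p, hpL⟩) with hj
        have hjK' : j ∈ Key ((Fc i).1.val + 1) := (hKeymem _ _).mpr rfl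
        have hjK : j ∉ Key ((Fc i0).1.val + 1) := fun hjm =>
          hpbit ((hKeymem _ _).mp hjm).symm
        have hs'' := hsell (Sum.inl (i0, j))
        rcases hg2 : g (Sum.inl (i0, j)) with j2 | ⟨h2, c2⟩
        · rw [hg2] at hs''
          have hsb : (j == j2) = true := hs''
          have hj2 : j = j2 := by simpa using hsb
          subst hj2
          have e1 : g (Sum.inl (i, j)) = g (Sum.inr i) := by
            apply hstar
            rw [hgF i]
            show (decide ((Fc i).2 ∈ C (Fc i).1) && decide (i ∈ (Fc i).2)
              && decide (j ∈ Key ((Fc i).1.val + 1))) = true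
            simp [hCF i, hmF i, hjK']
          have e2 : g (Sum.inl (i, j)) = g (Sum.inl (i0, j)) := by
            apply hstar
            rw [hg2]
            show (j == j) = true
            simp
          rw [hgF i] at e1
          rw [hg2] at e2
          rw [e2] at e1
          exact absurd e1 (by simp)
        · rw [hg2] at hs''
          have hsb : (decide (c2 ∈ C h2) && decide (i0 ∈ c2)
              && decide (j ∈ Key (h2.val + 1))) = true := hs''
          simp only [Bool.and_eq_true, decide_eq_true_eq] at hsb
          have e3 : g (Sum.inr i0) = g (Sum.inl (i0, j)) := by
            apply hstar
            rw [hg2]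
            show (decide (c2 ∈ C h2) && decide (i0 ∈ c2)) = true
            simp [hsb.1.1, hsb.1.2]
          rw [hgF i0, hg2] at e3
          have e4 : (Fc i0) = (h2, c2) := Sum.inr_injective e3
          apply hjK
          rw [show (Fc i0).1 = h2 from congrArg Prod.fst e4]
          exact hsb.2
      refine ⟨(Fc i0).1, Finset.image (fun i => (Fc i).2) Finset.univ, ?_, ?_⟩
      · intro c hc
        rcases Finset.mem_image.mp hc with ⟨i, -, rfl⟩
        have := hCF i
        rwa [hsame i] at this
      · intro i
        refine ⟨(Fc i).2, ⟨Finset.mem_image.mpr ⟨i, Finset.mem_univ i, rfl⟩, hmF i⟩, ?_⟩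
        rintro c' ⟨hc'S, hic'⟩
        rcases Finset.mem_image.mp hc'S with ⟨i', -, rfl⟩
        have hsell' : sells (g (Sum.inr i')) (Sum.inr i) = true := by
          rw [hgF i']
          show (decide ((Fc i').2 ∈ C (Fc i').1) && decide (i ∈ (Fc i').2)) = true
          simp [hCF i', hic']
        have e := hstar (Sum.inr i') (Sum.inr i) hsell'
        rw [hgF i, hgF i'] at e
        exact (congrArg Prod.snd (Sum.inr_injective e)).symm
  · rintro ⟨h, S', hS'C, hcov⟩
    choose f hf using hcov
    refine ⟨Sum.elim
      (fun p : Fin n × J =>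
        if p.2 ∈ Key (h.val + 1) then Sum.inr (h, f p.1) else Sum.inl p.2)
      (fun i => Sum.inr (h, f i)), ?_, ?_⟩
    · rintro (⟨i, j⟩ | i)
      · by_cases hj : j ∈ Key (h.val + 1)
        · simp only [Sum.elim_inl, if_pos hj]
          show (decide (f i ∈ C h) && decide (i ∈ f i)
            && decide (j ∈ Key (h.val + 1))) = true
          simp [hS'C (hf i).1.1, (hf i).1.2, hj]
        · simp only [Sum.elim_inl, if_neg hj]
          show (j == j) = true
          simp
      · simp only [Sum.elim_inr]
        show (decide (f i ∈ C h) && decide (i ∈ f i)) = true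
        simp [hS'C (hf i).1.1, (hf i).1.2]
    · rintro (⟨i, j⟩ | i) b' hbb'
      · by_cases hj : j ∈ Key (h.val + 1)
        · simp only [Sum.elim_inl, if_pos hj] at hbb' ⊢
          rcases b' with ⟨i', j'⟩ | i'
          · have hb : (decide (f i ∈ C h) && decide (i' ∈ f i)
                && decide (j' ∈ Key (h.val + 1))) = true := hbb'
            simp only [Bool.and_eq_true, decide_eq_true_eq] at hb
            have hfi : f i = f i' := (hf i').2 (f i) ⟨(hf i).1.1, hb.1.2⟩
            simp only [Sum.elim_inl, if_pos hb.2, ← hfi]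
          · have hb : (decide (f i ∈ C h) && decide (i' ∈ f i)) = true := hbb'
            simp only [Bool.and_eq_true, decide_eq_true_eq] at hb
            have hfi : f i = f i' := (hf i').2 (f i) ⟨(hf i).1.1, hb.2⟩
            simp only [Sum.elim_inr, ← hfi]
        · simp only [Sum.elim_inl, if_neg hj] at hbb' ⊢
          rcases b' with ⟨i', j'⟩ | i'
          · have hb : (j' == j) = true := hbb'
            have : j' = j := by simpa using hb
            subst this
            simp only [Sum.elim_inl, if_neg hj]
          · exact absurd (show false = true from hbb') (by simp)
      · simp only [Sum.elim_inr] at hbb' ⊢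
        rcases b' with ⟨i', j'⟩ | i'
        · have hb : (decide (f i ∈ C h) && decide (i' ∈ f i)
              && decide (j' ∈ Key (h.val + 1))) = true := hbb'
          simp only [Bool.and_eq_true, decide_eq_true_eq] at hb
          have hfi : f i = f i' := (hf i').2 (f i) ⟨(hf i).1.1, hb.1.2⟩
          simp only [Sum.elim_inl, if_pos hb.2, ← hfi]
        · have hb : (decide (f i ∈ C h) && decide (i' ∈ f i)) = true := hbb'
          simp only [Bool.and_eq_true, decide_eq_true_eq] at hb
          have hfi : f i = f i' := (hf i').2 (f i) ⟨(hf i).1.1, hb.2⟩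
          simp only [Sum.elim_inr, ← hfi]
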